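/- A bipartite tournament D with \zeta(D) >= 1 is acyclic if and only if the union of the even-indexed sink-sequence sets and the union of the odd-indexed sink-sequence sets are exactly the two partite sets of D. -/

import Mathlib

/-- `walkN D n u v` : there is a directed walk of length `n` from `u` to `v` in the digraph `D`. -/
def walkN {V : Type*} (D : V → V → Prop) : ℕ → V → V → Prop
  | 0 => fun u v => u = v
  | n+1 => fun u v => ∃ w, D u w ∧ walkN D n w v

/-- The `m`-step competition graph of the digraph `D`. -/
def cmGraph {V : Type*} (D : V → V → Prop) (m : ℕ) : SimpleGraph V where
  Adj u v := u ≠ v ∧ ∃ z, walkN D m u z ∧ walkN D m v z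
  symm := by
    constructor
    intro u v h
    exact ⟨Ne.symm h.1, h.2.imp fun z hz => ⟨hz.2, hz.1⟩⟩
  loopless := by constructor; intro v h; exact h.1 rfl

/-- Sinks of the subdigraph of `D` induced by `S`. -/
def sinks {V : Type*} (D : V → V → Prop) (S : Set V) : Set V :=
  {v ∈ S | ∀ w ∈ S, ¬ D v w}

/-- The digraph sequence `D_0, D_1, …` (as vertex sets) associated with the sink sequence. -/
def Dseq {V : Type*} (D : V → V → Prop) : ℕ → Set V
  | 0 => Set.univ
  | n+1 => Dseq D n \ sinks D (Dseq D n)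

/-- The sink sequence `W_0, W_1, …` of `D`. -/
def Wseq {V : Type*} (D : V → V → Prop) (n : ℕ) : Set V := sinks D (Dseq D n)

/-- `k` is the sink elimination index `ζ(D)`. -/
def IsSinkElimIndex {V : Type*} (D : V → V → Prop) (k : ℕ) : Prop :=
  (Wseq D k = Dseq D k ∨ Wseq D k = ∅) ∧
  ∀ j < k, Wseq D j ≠ Dseq D j ∧ Wseq D j ≠ ∅

/-- A digraph is acyclic iff it has no directed closed walk of positive length. -/
def DigraphAcyclic {V : Type*} (D : V → V → Prop) : Prop :=
  ∀ v : V, ∀ n : ℕ, 0 < n → ¬ walkN D n v v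

/-- `D` is a bipartite tournament with bipartition `(V1, V2)`. -/
structure IsBipartiteTournament {V : Type*} (D : V → V → Prop) (V1 V2 : Set V) : Prop where
  nonempty1 : V1.Nonempty
  nonempty2 : V2.Nonempty
  union_eq : V1 ∪ V2 = Set.univ
  disj : V1 ∩ V2 = ∅
  oriented : ∀ x ∈ V1, ∀ y ∈ V2, Xor' (D x y) (D y x)
  no_intra : ∀ x y, D x y → (x ∈ V1 ∧ y ∈ V2) ∨ (x ∈ V2 ∧ y ∈ V1)

/-- The competition graph sequence of `D` is eventually equal, starting from `q`. -/
def PeriodicFrom {V : Type*} (D : V → V → Prop) (q : ℕ) : Prop :=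
  ∃ r, 0 < r ∧ ∀ i : ℕ, cmGraph D (q + i) = cmGraph D (q + r + i)

/-- `q` is the competition index of `D`. -/
def IsCindex {V : Type*} (D : V → V → Prop) (q : ℕ) : Prop :=
  0 < q ∧ PeriodicFrom D q ∧ ∀ q', 0 < q' → PeriodicFrom D q' → q ≤ q'

/-- `p` is the competition period of `D`, given that `q` is its competition index. -/
def IsCperiod {V : Type*} (D : V → V → Prop) (q p : ℕ) : Prop :=
  0 < p ∧ cmGraph D q = cmGraph D (q + p) ∧
    ∀ p', 0 < p' → cmGraph D q = cmGraph D (q + p') → p ≤ p'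


section Helpers

variable {V : Type*} {D : V → V → Prop}

lemma Dseq_succ_sub (n : ℕ) : Dseq D (n+1) ⊆ Dseq D n := fun _ hv => hv.1

lemma Dseq_anti {n m : ℕ} (h : n ≤ m) : Dseq D m ⊆ Dseq D n := by
  induction m with
  | zero => simp_all
  | succ m ih =>
    rcases Nat.lt_or_ge n (m+1) with h' | h'
    · exact (Dseq_succ_sub m).trans (ih (Nat.lt_succ_iff.mp h'))
    · have : n = m + 1 := le_antisymm h h'
      subst this; exact subset_rfl

lemma Wseq_sub (n : ℕ) : Wseq D n ⊆ Dseq D n := fun _ hv => hv.1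

lemma mem_Wseq_of_not_Dseq {v : V} : ∀ n, v ∉ Dseq D n → ∃ j < n, v ∈ Wseq D j := by
  intro n; induction n with
  | zero => intro h; exact absurd (Set.mem_univ v) h
  | succ n ih =>
    intro h
    by_cases hv : v ∈ Dseq D n
    · refine ⟨n, Nat.lt_succ_self n, ?_⟩
      by_contra hw
      exact h ⟨hv, hw⟩
    · obtain ⟨j, hj, hw⟩ := ih hv
      exact ⟨j, hj.trans (Nat.lt_succ_self n), hw⟩

lemma Wseq_not_Dseq {v : V} {j n : ℕ} (h : j < n) (hv : v ∈ Wseq D j) : v ∉ Dseq D n :=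
  fun hn => (Dseq_anti (Nat.succ_le_of_lt h) hn).2 hv

lemma walkN_iterate (g : V → V) (S : Set V) (hg : ∀ v ∈ S, g v ∈ S ∧ D v (g v)) :
    ∀ n, ∀ v ∈ S, g^[n] v ∈ S ∧ walkN D n v (g^[n] v) := by
  intro n
  induction n with
  | zero => intro v hv; exact ⟨hv, rfl⟩
  | succ n ih =>
    intro v hv
    obtain ⟨h1, h2⟩ := hg v hv
    obtain ⟨h3, h4⟩ := ih (g v) h1
    rw [Function.iterate_succ_apply]
    exact ⟨h3, g v, h2, h4⟩

lemma sinks_nonempty_of_acyclic [Fintype V] (hac : DigraphAcyclic D) {S : Set V}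
    (hS : S.Nonempty) : (sinks D S).Nonempty := by
  classical
  by_contra h
  rw [Set.not_nonempty_iff_eq_empty] at h
  have hall : ∀ v ∈ S, ∃ w, w ∈ S ∧ D v w := by
    intro v hv
    by_contra hc
    push_neg at hc
    have hvs : v ∈ sinks D S := ⟨hv, hc⟩
    rw [h] at hvs
    exact hvs
  choose f hf1 hf2 using hall
  obtain ⟨v0, hv0⟩ := hS
  set g : V → V := fun v => if hv : v ∈ S then f v hv else v with hgdef
  have hg : ∀ v ∈ S, g v ∈ S ∧ D v (g v) := by
    intro v hv
    simp only [hgdef, dif_pos hv]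
    exact ⟨hf1 v hv, hf2 v hv⟩
  have key := walkN_iterate g S hg
  obtain ⟨a, b, hab, heq⟩ := Finite.exists_ne_map_eq_of_infinite (fun n : ℕ => g^[n] v0)
  wlog hlt : a < b generalizing a b
  · exact this b a hab.symm heq.symm (by omega)
  have huS : g^[a] v0 ∈ S := (key a v0 hv0).1
  have hw : walkN D (b - a) (g^[a] v0) (g^[b-a] (g^[a] v0)) := (key (b-a) _ huS).2
  have heq2 : g^[b-a] (g^[a] v0) = g^[a] v0 := by
    rw [← Function.iterate_add_apply, Nat.sub_add_cancel hlt.le]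
    exact heq.symm
  rw [heq2] at hw
  exact hac _ (b - a) (by omega) hw

lemma no_intra_edge {V1 V2 : Set V} (hD : IsBipartiteTournament D V1 V2)
    {x y : V} (hx : x ∈ V1) (hy : y ∈ V1) : ¬ D x y := by
  intro hxy
  rcases hD.no_intra x y hxy with ⟨_, h2⟩ | ⟨h1, _⟩
  · have : y ∈ V1 ∩ V2 := ⟨hy, h2⟩
    rw [hD.disj] at this; exact this
  · have : x ∈ V1 ∩ V2 := ⟨hx, h1⟩
    rw [hD.disj] at this; exact this

lemma IsBipartiteTournament.swap {V1 V2 : Set V} (hD : IsBipartiteTournament D V1 V2) :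
    IsBipartiteTournament D V2 V1 where
  nonempty1 := hD.nonempty2
  nonempty2 := hD.nonempty1
  union_eq := by rw [Set.union_comm]; exact hD.union_eq
  disj := by rw [Set.inter_comm]; exact hD.disj
  oriented := fun x hx y hy => (hD.oriented y hy x hx).symm
  no_intra := fun x y h => (hD.no_intra x y h).symm

lemma sinks_not_both {V1 V2 : Set V} (hD : IsBipartiteTournament D V1 V2)
    {i : ℕ} {v w : V} (hv : v ∈ Wseq D i) (hw : w ∈ Wseq D i)
    (hv1 : v ∈ V1) (hw2 : w ∈ V2) : False := by
  have h1 : ¬ D v w := hv.2 w hw.1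
  have h2 : ¬ D w v := hw.2 v hv.1
  rcases hD.oriented v hv1 w hw2 with ⟨h, _⟩ | ⟨h, _⟩
  · exact h1 h
  · exact h2 h

/-- alternation: if `Wseq i ⊆ V1` then `Wseq (i+1) ⊆ V2`. -/
lemma Wseq_alt {V1 V2 : Set V} (hD : IsBipartiteTournament D V1 V2)
    {i : ℕ} (h : Wseq D i ⊆ V1) : Wseq D (i+1) ⊆ V2 := by
  intro v hv
  have hvD : v ∈ Dseq D (i+1) := hv.1
  by_cases hv1 : v ∈ V1
  · exfalso
    have hvW : v ∈ Wseq D i := by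
      refine ⟨hvD.1, fun w hw => ?_⟩
      by_cases hwD : w ∈ Dseq D (i+1)
      · exact hv.2 w hwD
      · have hwW : w ∈ Wseq D i := by
          by_contra hc
          exact hwD ⟨hw, hc⟩
        exact no_intra_edge hD hv1 (h hwW)
    exact hvD.2 hvW
  · have := hD.union_eq
    have hvu : v ∈ V1 ∪ V2 := by rw [this]; exact Set.mem_univ v
    rcases hvu with h' | h'
    · exact absurd h' hv1
    · exact h'

lemma Wseq_alternating {V1 V2 : Set V} (hD : IsBipartiteTournament D V1 V2)
    (h0 : Wseq D 0 ⊆ V1) :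
    ∀ i, (Even i → Wseq D i ⊆ V1) ∧ (Odd i → Wseq D i ⊆ V2) := by
  intro i
  induction i with
  | zero => exact ⟨fun _ => h0, fun h => absurd h (by simp)⟩
  | succ i ih =>
    constructor
    · intro he
      have ho : Odd i := by
        rcases Nat.even_or_odd i with h | h
        · exfalso
          simp [Nat.even_iff] at he h
          omega
        · exact h
      exact Wseq_alt hD.swap (ih.2 ho)
    · intro ho
      have he : Even i := by
        rcases Nat.even_or_odd i with h | h
        · exact h
        · exfalso
          have h2 : Even (i+1) := h.add_one
          simp [Nat.even_iff, Nat.odd_iff] at h2 ho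
          omega
      exact Wseq_alt hD (ih.1 he)

lemma forward_dir [Fintype V] {V1 V2 : Set V} (hD : IsBipartiteTournament D V1 V2)
    {k : ℕ} (hk : IsSinkElimIndex D k) (hac : DigraphAcyclic D)
    (h0 : Wseq D 0 ⊆ V1) :
    (⋃ i ∈ {i | i ≤ k ∧ Even i}, Wseq D i) = V1 ∧
    (⋃ i ∈ {i | i ≤ k ∧ Odd i}, Wseq D i) = V2 := by
  have halt := Wseq_alternating hD h0
  -- Dseq (k+1) = ∅
  have hDk1 : Dseq D (k+1) = ∅ := by
    rcases hk.1 with h | h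
    · ext v
      simp only [Set.mem_empty_iff_false, iff_false]
      intro hv
      have hmem : v ∈ Wseq D k := by rw [h]; exact hv.1
      exact hv.2 hmem
    · have hDk : Dseq D k = ∅ := by
        by_contra hne
        have := sinks_nonempty_of_acyclic hac (Set.nonempty_iff_ne_empty.mpr hne)
        rw [show sinks D (Dseq D k) = Wseq D k from rfl, h] at this
        exact Set.not_nonempty_empty this
      ext v
      simp only [Set.mem_empty_iff_false, iff_false]
      intro hv
      have h2 := hv.1
      rw [hDk] at h2
      exact h2
  have cover : ∀ v : V, ∃ i ≤ k, v ∈ Wseq D i := by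
    intro v
    have : v ∉ Dseq D (k+1) := by rw [hDk1]; exact id
    obtain ⟨j, hj, hw⟩ := mem_Wseq_of_not_Dseq (k+1) this
    exact ⟨j, Nat.lt_succ_iff.mp hj, hw⟩
  have hsubE : (⋃ i ∈ {i | i ≤ k ∧ Even i}, Wseq D i) ⊆ V1 := by
    intro v hv
    simp only [Set.mem_iUnion] at hv
    obtain ⟨i, ⟨_, he⟩, hv⟩ := hv
    exact (halt i).1 he hv
  have hsubO : (⋃ i ∈ {i | i ≤ k ∧ Odd i}, Wseq D i) ⊆ V2 := by
    intro v hv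
    simp only [Set.mem_iUnion] at hv
    obtain ⟨i, ⟨_, ho⟩, hv⟩ := hv
    exact (halt i).2 ho hv
  have hcov : ∀ v : V, v ∈ (⋃ i ∈ {i | i ≤ k ∧ Even i}, Wseq D i) ∪
      (⋃ i ∈ {i | i ≤ k ∧ Odd i}, Wseq D i) := by
    intro v
    obtain ⟨i, hik, hv⟩ := cover v
    rcases Nat.even_or_odd i with h | h
    · left; simp only [Set.mem_iUnion]; exact ⟨i, ⟨hik, h⟩, hv⟩
    · right; simp only [Set.mem_iUnion]; exact ⟨i, ⟨hik, h⟩, hv⟩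
  constructor
  · apply Set.Subset.antisymm hsubE
    intro v hv1
    rcases hcov v with h | h
    · exact h
    · exfalso
      have : v ∈ V1 ∩ V2 := ⟨hv1, hsubO h⟩
      rw [hD.disj] at this; exact this
  · apply Set.Subset.antisymm hsubO
    intro v hv2
    rcases hcov v with h | h
    · exfalso
      have : v ∈ V1 ∩ V2 := ⟨hsubE h, hv2⟩
      rw [hD.disj] at this; exact this
    · exact h

/-- Backward direction: if every vertex is in some `Wseq` set, then acyclic. -/
lemma acyclic_of_cover (cover : ∀ v : V, ∃ i, v ∈ Wseq D i) : DigraphAcyclic D := by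
  classical
  set r : V → ℕ := fun v => Nat.find (cover v) with hrdef
  have hrW : ∀ v, v ∈ Wseq D (r v) := fun v => Nat.find_spec (cover v)
  have hedge : ∀ v w, D v w → r w < r v := by
    intro v w hvw
    have hv := hrW v
    have hwD : w ∉ Dseq D (r v) := fun hwD => hv.2 w hwD hvw
    obtain ⟨j, hj, hwW⟩ := mem_Wseq_of_not_Dseq (r v) hwD
    exact lt_of_le_of_lt (Nat.find_le hwW) hj
  have hwalk : ∀ n, ∀ v u : V, walkN D n v u → r u + n ≤ r v := by
    intro n
    induction n with
    | zero => intro v u h; rw [show u = v from h.symm]; omega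
    | succ n ih =>
      intro v u h
      obtain ⟨w, hvw, hwu⟩ := h
      have h1 := ih w u hwu
      have h2 := hedge v w hvw
      omega
  intro v n hn hwn
  have := hwalk n v v hwn
  omega

end Helpers

/-- A bipartite tournament with `ζ(D) ≥ 1` is acyclic iff the union of the
even-indexed sink-sequence sets and the union of the odd-indexed ones are exactly the
two partite sets. -/
theorem acyclic_iff_sink_unions_are_parts {V : Type*} [Fintype V] (D : V → V → Prop)
    (V1 V2 : Set V) (hD : IsBipartiteTournament D V1 V2)
    (k : ℕ) (hk : IsSinkElimIndex D k) (hk1 : 1 ≤ k) :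
    DigraphAcyclic D ↔
      (((⋃ i ∈ {i | i ≤ k ∧ Even i}, Wseq D i) = V1 ∧
        (⋃ i ∈ {i | i ≤ k ∧ Odd i}, Wseq D i) = V2) ∨
       ((⋃ i ∈ {i | i ≤ k ∧ Even i}, Wseq D i) = V2 ∧
        (⋃ i ∈ {i | i ≤ k ∧ Odd i}, Wseq D i) = V1)) := by
  constructor
  · intro hac
    -- Wseq 0 nonempty
    have h0ne : Wseq D 0 ≠ ∅ := (hk.2 0 hk1).2
    rw [← Set.nonempty_iff_ne_empty] at h0ne
    obtain ⟨x, hx⟩ := h0ne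
    have hxu : x ∈ V1 ∪ V2 := by rw [hD.union_eq]; exact Set.mem_univ x
    rcases hxu with hx1 | hx2
    · left
      apply forward_dir hD hk hac
      intro y hy
      have hyu : y ∈ V1 ∪ V2 := by rw [hD.union_eq]; exact Set.mem_univ y
      rcases hyu with h | h
      · exact h
      · exact absurd (sinks_not_both hD hx hy hx1 h) id
    · right
      apply forward_dir hD.swap hk hac
      intro y hy
      have hyu : y ∈ V1 ∪ V2 := by rw [hD.union_eq]; exact Set.mem_univ y
      rcases hyu with h | h
      · exact absurd (sinks_not_both hD hy hx h hx2) id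
      · exact h
  · intro h
    apply acyclic_of_cover
    intro v
    have hv : v ∈ V1 ∪ V2 := by rw [hD.union_eq]; exact Set.mem_univ v
    have hvin : v ∈ (⋃ i ∈ {i | i ≤ k ∧ Even i}, Wseq D i) ∪
        (⋃ i ∈ {i | i ≤ k ∧ Odd i}, Wseq D i) := by
      rcases h with ⟨hE, hO⟩ | ⟨hE, hO⟩
      · rw [hE, hO]; exact hv
      · rw [hE, hO]; exact hv.symm
    rcases hvin with h' | h' <;>
    · simp only [Set.mem_iUnion] at h'
      obtain ⟨i, _, hi⟩ := h'
      exact ⟨i, hi⟩
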